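/- arXiv:2503.19562 — 4 statements merged into one kernel-verified Lean document; each statement's English description precedes it below -/
import Mathlib

section
/- Let n ≥ 1, let λ = (λ₁,…,λₙ) ∈ ℂⁿ satisfy |λᵢ| < 1 for every i, and let c ∈ ℂ with |c| ≥ 1 and c ≠ 1. If f : ℂⁿ → ℂ is continuous and satisfies f(d_λ(z)) = c·f(z) for all z ∈ ℂⁿ, then f is identically zero. -/
/-- If `f : ℂⁿ → ℂ` is continuous, `|λ_i| < 1` for all `i`, `|c| ≥ 1`, `c ≠ 1`, and
`f ∘ d_λ = c·f`, then `f ≡ 0`. -/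
theorem stmt_4 (n : ℕ) (hn : 1 ≤ n) (lam : Fin n → ℂ)
    (hlam : ∀ i, ‖lam i‖ < 1)
    (c : ℂ) (hc1 : 1 ≤ ‖c‖) (hc2 : c ≠ 1)
    (f : (Fin n → ℂ) → ℂ) (hf : Continuous f)
    (hinv : ∀ z, f (fun i => lam i * z i) = c * f z) :
    ∀ z, f z = 0 := by
  -- f 0 = 0
  have h0 : f 0 = 0 := by
    have := hinv 0
    simp only [Pi.zero_apply, mul_zero] at this
    have h : f (fun _ : Fin n => (0:ℂ)) = f 0 := by
      congr 1
    rw [h] at this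
    have : (c - 1) * f 0 = 0 := by linear_combination -this
    rcases mul_eq_zero.mp this with h | h
    · exact absurd (sub_eq_zero.mp h) hc2
    · exact h
  intro z
  -- iterate
  have hiter : ∀ k : ℕ, f (fun i => lam i ^ k * z i) = c ^ k * f z := by
    intro k
    induction k with
    | zero => simp
    | succ k ih =>
      have := hinv (fun i => lam i ^ k * z i)
      rw [ih] at this
      have h : (fun i => lam i * (lam i ^ k * z i)) = fun i => lam i ^ (k+1) * z i := by
        funext i; ring
      rw [h] at this
      rw [this]; ring
  -- tendsto
  have htend : Filter.Tendsto (fun k : ℕ => (fun i => lam i ^ k * z i)) Filter.atTop (nhds 0) := by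
    rw [tendsto_pi_nhds]
    intro i
    have : Filter.Tendsto (fun k : ℕ => lam i ^ k) Filter.atTop (nhds 0) := by
      apply tendsto_pow_atTop_nhds_zero_of_norm_lt_one
      exact hlam i
    simpa using this.mul_const (z i)
  have h2 : Filter.Tendsto (fun k : ℕ => c ^ k * f z) Filter.atTop (nhds 0) := by
    have h := (hf.tendsto 0).comp htend
    rw [h0] at h
    have heq : (f ∘ fun k (i : Fin n) => lam i ^ k * z i) = fun k => c ^ k * f z := by
      funext k; exact hiter k
    rwa [heq] at h
  have h3 : Filter.Tendsto (fun k : ℕ => ‖c ^ k * f z‖) Filter.atTop (nhds 0) := by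
    have := (continuous_norm.tendsto 0).comp h2
    simpa [Function.comp_def] using this
  by_contra hne
  have hlb : ∀ k : ℕ, ‖f z‖ ≤ ‖c ^ k * f z‖ := by
    intro k
    rw [norm_mul, norm_pow]
    nlinarith [one_le_pow₀ hc1 (n:=k), norm_nonneg (f z),
      pow_nonneg (norm_nonneg c) k]
  have : ‖f z‖ ≤ 0 := le_of_tendsto_of_tendsto tendsto_const_nhds h3
    (Filter.Eventually.of_forall hlb)
  exact hne (norm_eq_zero.mp (le_antisymm this (norm_nonneg _)))
end

section
/- Let n ≥ 1 and let λ = (λ₁,…,λₙ) ∈ ℂⁿ satisfy |λᵢ| < 1 for every i. Then for every function f : ℂⁿ → ℂ that is analytic on all of ℂⁿ and satisfies f(0) = 0, there exists a function g : ℂⁿ → ℂ analytic on all of ℂⁿ with g(0) = 0 such that f(z) = g(z) − g(d_λ(z)) for all z ∈ ℂⁿ. -/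
open scoped NNReal ENNReal

lemma aux_tsum_fps {E F : Type*} [NormedAddCommGroup E] [NormedSpace ℂ E]
    [NormedAddCommGroup F] [NormedSpace ℂ F] [CompleteSpace F]
    {f : ℕ → E → F} {p : ℕ → FormalMultilinearSeries ℂ E F} {x : E} {r : ℝ≥0}
    (hr : 0 < r) (h : ∀ k, HasFPowerSeriesOnBall (f k) (p k) x r)
    (hs : Summable fun km : ℕ × ℕ => ‖p km.1 km.2‖ * (r : ℝ) ^ km.2) :
    (∀ y ∈ Metric.eball (0 : E) (r : ℝ≥0∞), Summable fun k => f k (x + y)) ∧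
      HasFPowerSeriesOnBall (fun z => ∑' k, f k z) (fun m => ∑' k, p k m) x r := by
  -- summable slices of hs
  have hs_fub := (summable_prod_of_nonneg (fun km => by positivity)).mp hs
  -- for each m, Summable fun k => ‖p k m‖
  have hslice : ∀ m : ℕ, Summable fun k => ‖p k m‖ := by
    intro m
    have h1 : Summable fun k => ‖p k m‖ * (r : ℝ) ^ m := hs.prod_symm.prod_factor m
    have h2 := h1.mul_right ((r : ℝ) ^ m)⁻¹
    refine h2.congr fun k => ?_
    field_simp
  have hQsm : ∀ m : ℕ, Summable fun k => p k m :=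
    fun m => Summable.of_norm (hslice m)
  -- pointwise facts for y in the ball
  have key : ∀ y : E, y ∈ Metric.eball (0 : E) (r : ℝ≥0∞) →
      (Summable fun k => f k (x + y)) ∧
      HasSum (fun m => (∑' k, p k m) (fun _ => y)) (∑' k, f k (x + y)) := by
    intro y hy
    have hyr : ‖y‖ < (r : ℝ) := by
      rw [mem_emetric_ball_zero_iff] at hy
      exact_mod_cast hy
    set F : ℕ × ℕ → F := fun km => p km.1 km.2 (fun _ => y) with hF_def
    have hbound : ∀ km : ℕ × ℕ, ‖F km‖ ≤ ‖p km.1 km.2‖ * (r : ℝ) ^ km.2 := by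
      rintro ⟨k, m⟩
      calc ‖p k m (fun _ => y)‖ ≤ ‖p k m‖ * ∏ _i : Fin m, ‖y‖ :=
            (p k m).le_opNorm _
        _ = ‖p k m‖ * ‖y‖ ^ m := by simp [Finset.prod_const]
        _ ≤ ‖p k m‖ * (r : ℝ) ^ m := by
            gcongr
    have hFn : Summable fun km => ‖F km‖ :=
      hs.of_nonneg_of_le (fun _ => norm_nonneg _) hbound
    have hF : Summable F := hFn.of_norm
    have hFn_fub := (summable_prod_of_nonneg (fun km => norm_nonneg (F km))).mp hFn
    -- each row sums to f k (x+y)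
    have hrow : ∀ k, HasSum (fun m => F (k, m)) (f k (x + y)) := fun k => (h k).hasSum hy
    have hfk_eq : ∀ k, f k (x + y) = ∑' m, F (k, m) := fun k => (hrow k).tsum_eq.symm
    have hsumf : Summable fun k => f k (x + y) := by
      refine Summable.of_norm_bounded (g := fun k => ∑' m, ‖F (k, m)‖) hFn_fub.2 fun k => ?_
      rw [hfk_eq k]
      exact norm_tsum_le_tsum_norm (hFn.prod_factor k |>.congr fun m => rfl)
    refine ⟨hsumf, ?_⟩
    -- evaluation of the summed multilinear maps
    have heval : ∀ m, (∑' k, p k m) (fun _ => y) = ∑' k, F (k, m) := by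
      intro m
      exact ContinuousMultilinearMap.tsum_eval (hQsm m) _
    have hsum_col : Summable fun m => ∑' k, F (k, m) := by
      have hFn_fub2 := (summable_prod_of_nonneg
        (fun mk => norm_nonneg (F mk.swap))).mp hFn.prod_symm
      refine Summable.of_norm_bounded (g := fun m => ∑' k, ‖F (k, m)‖) hFn_fub2.2 fun m => ?_
      exact norm_tsum_le_tsum_norm (hFn.prod_symm.prod_factor m)
    have hval : ∑' m, ∑' k, F (k, m) = ∑' k, f k (x + y) := by
      have h1 : ∑' m, ∑' k, F (k, m) = ∑' k, ∑' m, F (k, m) :=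
        Summable.tsum_comm' hF (hF.prod_factor) (hF.prod_symm.prod_factor)
      rw [h1]
      exact tsum_congr fun k => (hfk_eq k).symm
    have : HasSum (fun m => ∑' k, F (k, m)) (∑' k, f k (x + y)) := by
      rw [← hval]
      exact hsum_col.hasSum
    refine HasSum.congr_fun this fun m => heval m
  refine ⟨fun y hy => (key y hy).1, ?_⟩
  constructor
  · -- radius bound
    apply FormalMultilinearSeries.le_radius_of_summable
    have hs_fub2 := (summable_prod_of_nonneg
      (fun mk : ℕ × ℕ => by positivity : ∀ mk : ℕ × ℕ,
        (0:ℝ) ≤ ‖p mk.2 mk.1‖ * (r : ℝ) ^ mk.1)).mp hs.prod_symm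
    refine Summable.of_nonneg_of_le (fun m => by positivity)
      (fun m => ?_) hs_fub2.2
    calc ‖∑' k, p k m‖ * (r : ℝ) ^ m ≤ (∑' k, ‖p k m‖) * (r : ℝ) ^ m := by
          gcongr
          exact norm_tsum_le_tsum_norm (hslice m)
      _ = ∑' k, ‖p k m‖ * (r : ℝ) ^ m := tsum_mul_right.symm
  · exact_mod_cast hr
  · intro y hy
    exact (key y hy).2

set_option maxHeartbeats 1000000
open Filter

/-- For entire `f : ℂⁿ → ℂ` with `f 0 = 0` and `|λ_i| < 1` for all `i`, the equation
`f = g − g ∘ d_λ` is solvable with `g` entire and `g 0 = 0`. -/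
theorem stmt_5 (n : ℕ) (hn : 1 ≤ n) (lam : Fin n → ℂ)
    (hlam : ∀ i, ‖lam i‖ < 1)
    (f : (Fin n → ℂ) → ℂ) (hf : ∀ z, AnalyticAt ℂ f z) (hf0 : f 0 = 0) :
    ∃ g : (Fin n → ℂ) → ℂ, (∀ z, AnalyticAt ℂ g z) ∧ g 0 = 0 ∧
      ∀ z, f z = g z - g (fun i => lam i * z i) := by
  -- the diagonal contraction maps
  set u : ℕ → (Fin n → ℂ) →L[ℂ] (Fin n → ℂ) :=
    fun k => ContinuousLinearMap.pi fun i => (lam i ^ k) • ContinuousLinearMap.proj i with hu_def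
  have hu_apply : ∀ k (z : Fin n → ℂ), u k z = fun i => lam i ^ k * z i := by
    intro k z
    funext i
    rw [hu_def]
    simp [ContinuousLinearMap.pi_apply, ContinuousLinearMap.smul_apply,
      ContinuousLinearMap.proj_apply, smul_eq_mul]
  set ρ : ℝ := ‖lam‖ with hρ_def
  have hρ0 : 0 ≤ ρ := norm_nonneg _
  have hρ1 : ρ < 1 := by
    rw [hρ_def]
    refine (pi_norm_lt_iff zero_lt_one).mpr fun i => ?_
    simpa using hlam i
  have hu_norm : ∀ k, ‖u k‖ ≤ ρ ^ k := by
    intro k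
    refine ContinuousLinearMap.opNorm_le_bound _ (by positivity) fun z => ?_
    rw [hu_apply]
    refine (pi_norm_le_iff_of_nonneg (by positivity)).mpr fun i => ?_
    rw [norm_mul, norm_pow]
    gcongr
    · exact norm_le_pi_norm lam i
    · exact norm_le_pi_norm z i
  -- the power series of f at 0
  obtain ⟨p, rp, hp⟩ := hf 0
  obtain ⟨r0, hr00, hr0p⟩ := ENNReal.lt_iff_exists_nnreal_btwn.mp hp.r_pos
  have hr0pos : (0 : ℝ≥0) < r0 := by exact_mod_cast hr00
  have hr0real : (0 : ℝ) < (r0 : ℝ) := hr0pos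
  have hp' : HasFPowerSeriesOnBall f p 0 r0 := hp.mono (by exact_mod_cast hr0pos) hr0p.le
  have hsum_p : Summable fun m => ‖p m‖ * (r0 : ℝ) ^ m :=
    p.summable_norm_mul_pow (lt_of_lt_of_le hr0p hp.r_le)
  have hp0 : p 0 = 0 := by
    ext v
    rw [hp.coeff_zero v, hf0]
    rfl
  -- the series of f ∘ u k
  set q : ℕ → FormalMultilinearSeries ℂ (Fin n → ℂ) ℂ :=
    fun k => p.compContinuousLinearMap (u k) with hq_def
  have hq_norm : ∀ k m, ‖q k m‖ ≤ ‖p m‖ * ‖u k‖ ^ m := by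
    intro k m
    calc ‖q k m‖ ≤ ‖p m‖ * ∏ _i : Fin m, ‖u k‖ :=
          (p m).norm_compContinuousLinearMap_le _
      _ = ‖p m‖ * ‖u k‖ ^ m := by simp [Finset.prod_const]
  have huk_le_one : ∀ k, ‖u k‖ ≤ 1 := fun k =>
    (hu_norm k).trans (pow_le_one₀ hρ0 hρ1.le)
  have huk_y : ∀ k (y : Fin n → ℂ), ‖u k y‖ ≤ ‖y‖ := by
    intro k y
    calc ‖u k y‖ ≤ ‖u k‖ * ‖y‖ := (u k).le_opNorm y
      _ ≤ 1 * ‖y‖ := mul_le_mul_of_nonneg_right (huk_le_one k) (norm_nonneg _)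
      _ = ‖y‖ := one_mul _
  have hq : ∀ k, HasFPowerSeriesOnBall (fun z => f (u k z)) (q k) 0 r0 := by
    intro k
    refine ⟨?_, by exact_mod_cast hr0pos, ?_⟩
    · apply FormalMultilinearSeries.le_radius_of_summable
      refine Summable.of_nonneg_of_le (fun m => by positivity) (fun m => ?_) hsum_p
      have : ‖q k m‖ ≤ ‖p m‖ := by
        calc ‖q k m‖ ≤ ‖p m‖ * ‖u k‖ ^ m := hq_norm k m
          _ ≤ ‖p m‖ * 1 ^ m := by
              refine mul_le_mul_of_nonneg_left ?_ (norm_nonneg _)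
              exact pow_le_pow_left₀ (norm_nonneg _) (huk_le_one k) m
          _ = ‖p m‖ := by rw [one_pow, mul_one]
      exact mul_le_mul_of_nonneg_right this (by positivity)
    · intro y hy
      rw [mem_emetric_ball_zero_iff] at hy
      have hyr : ‖y‖ < (r0 : ℝ) := by exact_mod_cast hy
      have hy2 : ‖u k y‖ < (r0 : ℝ) := lt_of_le_of_lt (huk_y k y) hyr
      have hy2' : u k y ∈ Metric.eball (0 : Fin n → ℂ) (r0 : ℝ≥0∞) := by
        rw [mem_emetric_ball_zero_iff]
        exact_mod_cast hy2
      have hhs := hp'.hasSum hy2'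
      simp only [zero_add] at hhs ⊢
      refine HasSum.congr_fun hhs fun m => ?_
      rw [hq_def]
      simp [FormalMultilinearSeries.compContinuousLinearMap]
  -- the key summability over ℕ × ℕ
  have hs : Summable fun km : ℕ × ℕ => ‖q km.1 km.2‖ * (r0 : ℝ) ^ km.2 := by
    have hB : Summable fun km : ℕ × ℕ =>
        (ρ ^ km.1) * (if km.2 = 0 then 0 else ‖p km.2‖ * (r0 : ℝ) ^ km.2) := by
      refine Summable.mul_of_nonneg (f := fun k => ρ ^ k)
        (g := fun m => if m = 0 then 0 else ‖p m‖ * (r0 : ℝ) ^ m)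
        (summable_geometric_of_lt_one hρ0 hρ1) ?_
        (by intro k; simpa using pow_nonneg hρ0 k)
        (by intro m; simp only [Pi.zero_apply]; split <;> [exact le_rfl; positivity])
      refine Summable.of_nonneg_of_le
        (fun m => by split <;> [exact le_rfl; positivity]) (fun m => ?_) hsum_p
      split <;> [positivity; exact le_rfl]
    refine Summable.of_nonneg_of_le (fun km => by positivity) (fun km => ?_) hB
    obtain ⟨k, m⟩ := km
    rcases Nat.eq_zero_or_pos m with hm | hm
    · subst hm
      rw [if_pos rfl, mul_zero, pow_zero, mul_one]
      calc ‖q k 0‖ ≤ ‖p 0‖ * ‖u k‖ ^ 0 := hq_norm k 0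
        _ = 0 := by rw [hp0]; simp
    · rw [if_neg hm.ne']
      have h5 : ‖u k‖ ^ m ≤ ρ ^ k := by
        calc ‖u k‖ ^ m ≤ (ρ ^ k) ^ m :=
              pow_le_pow_left₀ (norm_nonneg _) (hu_norm k) m
          _ ≤ ρ ^ k := pow_le_of_le_one (by positivity) (pow_le_one₀ hρ0 hρ1.le) hm.ne'
      calc ‖q k m‖ * (r0 : ℝ) ^ m ≤ (‖p m‖ * ‖u k‖ ^ m) * (r0 : ℝ) ^ m :=
            mul_le_mul_of_nonneg_right (hq_norm k m) (by positivity)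
        _ ≤ (‖p m‖ * ρ ^ k) * (r0 : ℝ) ^ m := by
            refine mul_le_mul_of_nonneg_right ?_ (by positivity)
            exact mul_le_mul_of_nonneg_left h5 (norm_nonneg _)
        _ = (ρ ^ k) * (‖p m‖ * (r0 : ℝ) ^ m) := by ring
  obtain ⟨hsumball, hball⟩ := aux_tsum_fps hr0pos hq hs
  set g : (Fin n → ℂ) → ℂ := fun z => ∑' k, f (u k z) with hg_def
  -- composition identity
  have hcomp : ∀ k N (z : Fin n → ℂ), u k (u N z) = u (k + N) z := by
    intro k N z
    rw [hu_apply, hu_apply, hu_apply]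
    funext i
    rw [pow_add]
    ring
  -- find a contraction into the ball
  have hNex : ∀ z : Fin n → ℂ, ∃ N, ‖u N z‖ < (r0 : ℝ) := by
    intro z
    have h0 : Tendsto (fun k => ρ ^ k * ‖z‖) atTop (nhds 0) := by
      simpa using (tendsto_pow_atTop_nhds_zero_of_lt_one hρ0 hρ1).mul_const ‖z‖
    obtain ⟨N, hN⟩ := (h0.eventually (gt_mem_nhds hr0real)).exists
    refine ⟨N, lt_of_le_of_lt ?_ hN⟩
    exact ((u N).le_opNorm z).trans
      (mul_le_mul_of_nonneg_right (hu_norm N) (norm_nonneg _))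
  have hmem : ∀ w : Fin n → ℂ, ‖w‖ < (r0 : ℝ) →
      w ∈ Metric.eball (0 : Fin n → ℂ) (r0 : ℝ≥0∞) := by
    intro w hw
    rw [mem_emetric_ball_zero_iff]
    exact_mod_cast hw
  -- global summability
  have S : ∀ z : Fin n → ℂ, Summable fun k => f (u k z) := by
    intro z
    obtain ⟨N, hN⟩ := hNex z
    have hw := hsumball (u N z) (hmem _ hN)
    simp only [zero_add] at hw
    have hw' : Summable fun k => f (u (k + N) z) := by
      refine hw.congr fun k => ?_
      rw [hcomp]
    exact (summable_nat_add_iff N).mp hw'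
  refine ⟨g, ?_, ?_, ?_⟩
  · -- analyticity everywhere
    intro z₀
    obtain ⟨N, hN⟩ := hNex z₀
    have hgeq : g = fun z => (∑ k ∈ Finset.range N, f (u k z)) + g (u N z) := by
      funext z
      simp only [hg_def]
      have hsplit := (S z).sum_add_tsum_nat_add N
      rw [← hsplit]
      congr 1
      exact tsum_congr fun k => by rw [← hcomp]
    rw [hgeq]
    refine AnalyticAt.add ?_ ?_
    · exact Finset.analyticAt_fun_sum _ fun k _ => (hf (u k z₀)).comp ((u k).analyticAt z₀)
    · exact (hball.analyticAt_of_mem (hmem _ hN)).comp ((u N).analyticAt z₀)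
  · -- g 0 = 0
    simp only [hg_def]
    simp only [map_zero, hf0]
    exact tsum_zero
  · -- the functional equation
    intro z
    have h1 : g z = f (u 0 z) + ∑' k, f (u (k + 1) z) := (S z).tsum_eq_zero_add
    have h2 : u 0 z = z := by rw [hu_apply]; funext i; simp
    have h3 : ∀ k, u (k + 1) z = u k (fun i => lam i * z i) := by
      intro k
      rw [hu_apply, hu_apply]
      funext i
      rw [pow_succ]
      ring
    have h4 : (∑' k, f (u (k + 1) z)) = g (fun i => lam i * z i) := by
      simp only [hg_def]
      exact tsum_congr fun k => by rw [h3]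
    rw [h1, h2, h4]
    ring
end

section
/- Let n ≥ 1 and let λ = (λ₁,…,λₙ) ∈ ℂⁿ with λᵢ ≠ 0 for every i. Let g and h be nonzero formal power series in n variables over ℂ, and let g_λ (resp. h_λ) denote the formal power series whose coefficient at each multi-index m ∈ ℕⁿ is λ^m times the coefficient of g (resp. h) at m. If g_λ · h = h_λ · g as formal power series, then there exist multi-indices m₀ in the support of g and l₀ in the support of h such that λ^{m₀} = λ^{l₀}. -/
/-- If `g, h` are nonzero formal power series with `g_λ h = h_λ g`, where `g_λ` has
coefficients `λ^m · g_m`, then some `m₀` in the support of `g` and `l₀` in the support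
of `h` satisfy `λ^{m₀} = λ^{l₀}`. -/
theorem stmt_7 (n : ℕ) (hn : 1 ≤ n) (lam : Fin n → ℂ) (hlam : ∀ i, lam i ≠ 0)
    (g h gl hl : MvPowerSeries (Fin n) ℂ) (hg : g ≠ 0) (hh : h ≠ 0)
    (hgl : ∀ m : Fin n →₀ ℕ,
      MvPowerSeries.coeff m gl = (∏ i, lam i ^ m i) * MvPowerSeries.coeff m g)
    (hhl : ∀ m : Fin n →₀ ℕ,
      MvPowerSeries.coeff m hl = (∏ i, lam i ^ m i) * MvPowerSeries.coeff m h)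
    (heq : gl * h = hl * g) :
    ∃ m₀ l₀ : Fin n →₀ ℕ,
      MvPowerSeries.coeff m₀ g ≠ 0 ∧ MvPowerSeries.coeff l₀ h ≠ 0 ∧
      (∏ i, lam i ^ m₀ i) = ∏ i, lam i ^ l₀ i := by
  classical
  have wf : WellFoundedLT (Lex (Fin n →₀ ℕ)) := inferInstance
  -- supports are nonempty
  have hgS : ∃ m : Lex (Fin n →₀ ℕ), MvPowerSeries.coeff (ofLex m) g ≠ 0 := by
    by_contra hc
    push_neg at hc
    exact hg (MvPowerSeries.ext fun m => by simpa using hc (toLex m))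
  have hhS : ∃ m : Lex (Fin n →₀ ℕ), MvPowerSeries.coeff (ofLex m) h ≠ 0 := by
    by_contra hc
    push_neg at hc
    exact hh (MvPowerSeries.ext fun m => by simpa using hc (toLex m))
  set Sg : Set (Lex (Fin n →₀ ℕ)) := {m | MvPowerSeries.coeff (ofLex m) g ≠ 0}
  set Sh : Set (Lex (Fin n →₀ ℕ)) := {m | MvPowerSeries.coeff (ofLex m) h ≠ 0}
  obtain ⟨M₀, hM₀, hM₀min⟩ := wf.wf.has_min Sg hgS
  obtain ⟨L₀, hL₀, hL₀min⟩ := wf.wf.has_min Sh hhS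
  set m₀ : Fin n →₀ ℕ := ofLex M₀
  set l₀ : Fin n →₀ ℕ := ofLex L₀
  refine ⟨m₀, l₀, hM₀, hL₀, ?_⟩
  -- compare coefficients at m₀ + l₀
  have hco := congrArg (MvPowerSeries.coeff (m₀ + l₀)) heq
  rw [MvPowerSeries.coeff_mul, MvPowerSeries.coeff_mul] at hco
  -- all antidiagonal terms except (m₀, l₀) vanish
  have key : ∀ p ∈ Finset.HasAntidiagonal.antidiagonal (m₀ + l₀), p ≠ (m₀, l₀) →
      MvPowerSeries.coeff p.1 g * MvPowerSeries.coeff p.2 h = 0 := by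
    rintro ⟨a, b⟩ hp hne
    rw [Finset.HasAntidiagonal.mem_antidiagonal] at hp
    by_contra hab
    have hga : MvPowerSeries.coeff a g ≠ 0 := fun h0 => hab (by rw [h0, zero_mul])
    have hhb : MvPowerSeries.coeff b h ≠ 0 := fun h0 => hab (by rw [h0, mul_zero])
    have ha : M₀ ≤ toLex a := not_lt.mp fun hlt => hM₀min (toLex a) hga hlt
    have hb : L₀ ≤ toLex b := not_lt.mp fun hlt => hL₀min (toLex b) hhb hlt
    have hsum : toLex a + toLex b = M₀ + L₀ := by
      have : toLex (a + b) = toLex (m₀ + l₀) := congrArg toLex hp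
      simpa [m₀, l₀] using this
    have haeq : toLex a = M₀ := by
      by_contra hne'
      have hlt : M₀ < toLex a := lt_of_le_of_ne ha (Ne.symm hne')
      have : M₀ + L₀ < toLex a + toLex b := add_lt_add_of_lt_of_le hlt hb
      exact absurd hsum (ne_of_gt this)
    have hbeq : toLex b = L₀ := by
      have := hsum
      rw [haeq] at this
      exact add_left_cancel this
    exact hne (by
      have h1 : a = m₀ := congrArg ofLex haeq
      have h2 : b = l₀ := congrArg ofLex hbeq
      rw [h1, h2])
  have hL := Finset.sum_eq_single_of_mem (f := fun p =>
      MvPowerSeries.coeff p.1 gl * MvPowerSeries.coeff p.2 h)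
      (s := Finset.HasAntidiagonal.antidiagonal (m₀ + l₀))
      ((m₀, l₀) : (Fin n →₀ ℕ) × (Fin n →₀ ℕ))
      (Finset.HasAntidiagonal.mem_antidiagonal.mpr rfl)
      (fun p hp hne => by
        rw [hgl p.1]
        have hk := key p hp hne
        linear_combination (∏ i, lam i ^ p.1 i) * hk)
  have hR := Finset.sum_eq_single_of_mem (f := fun p =>
      MvPowerSeries.coeff p.1 hl * MvPowerSeries.coeff p.2 g)
      (s := Finset.HasAntidiagonal.antidiagonal (m₀ + l₀))
      ((l₀, m₀) : (Fin n →₀ ℕ) × (Fin n →₀ ℕ))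
      (Finset.HasAntidiagonal.mem_antidiagonal.mpr (add_comm l₀ m₀))
      (fun p hp hne => by
        rw [hhl p.1]
        have hp' : (p.2, p.1) ∈ Finset.HasAntidiagonal.antidiagonal (m₀ + l₀) := by
          rw [Finset.HasAntidiagonal.mem_antidiagonal] at hp ⊢
          rw [add_comm]; exact hp
        have hne' : (p.2, p.1) ≠ (m₀, l₀) := by
          intro hc
          exact hne (Prod.ext (congrArg Prod.snd hc) (congrArg Prod.fst hc))
        have hk := key (p.2, p.1) hp' hne'
        simp only at hk
        linear_combination (∏ i, lam i ^ p.1 i) * hk)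
  rw [hL, hR] at hco
  dsimp only at hco
  rw [hgl, hhl] at hco
  have hprod : MvPowerSeries.coeff m₀ g * MvPowerSeries.coeff l₀ h ≠ 0 :=
    mul_ne_zero hM₀ hL₀
  have h2 : (∏ i, lam i ^ m₀ i) * (MvPowerSeries.coeff m₀ g * MvPowerSeries.coeff l₀ h)
      = (∏ i, lam i ^ l₀ i) * (MvPowerSeries.coeff m₀ g * MvPowerSeries.coeff l₀ h) := by
    linear_combination hco
  exact mul_right_cancel₀ hprod h2
end

section
/- Let n ≥ 1 and let λ = (λ₁,…,λₙ) ∈ ℂⁿ with λᵢ ≠ 0 for all i, and suppose λ is non-resonant in degrees ≥ 2, i.e. for every s ∈ {1,…,n} and every m ∈ ℕⁿ with m₁ + ⋯ + mₙ ≥ 2 one has λ^m ≠ λ_s. Let γ = (γ₁,…,γₙ) be an n-tuple of formal power series in n variables over ℂ such that each γ_i has zero constant term and linear part λ_i z_i (i.e. the coefficient of z_j in γ_i is λ_i if j = i and 0 otherwise). Then there exists an n-tuple h = (h₁,…,hₙ) of formal power series with zero constant terms and linear part the identity (the coefficient of z_j in h_i is δ_{ij}) such that h ∘ γ = d_λ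 ∘ h as formal power series, i.e. for each i, substituting γ₁,…,γₙ into h_i yields λ_i·h_i. -/
/-- Substitution of an `n`-tuple `γ` of multivariate formal power series (each with
zero constant term) into a multivariate formal power series `h`, i.e. `h ∘ γ`.
The coefficient of `h ∘ γ` at a multi-index `e` is
`∑_m (coeff m h) · coeff e (γ^m)`; when each `γ i` has zero constant term, only the
multi-indices `m` with `|m| ≤ |e|` (in particular `m i ≤ |e|` for each `i`)
contribute, so the sum below computes it. -/
noncomputable def psComp (n : ℕ) (γ : Fin n → MvPowerSeries (Fin n) ℂ)
    (h : MvPowerSeries (Fin n) ℂ) : MvPowerSeries (Fin n) ℂ :=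
  fun e =>
    ∑ m ∈ Finset.Iic (Finsupp.equivFunOnFinite.symm fun _ => e.sum fun _ k => k),
      MvPowerSeries.coeff m h * MvPowerSeries.coeff e (∏ i, γ i ^ m i)


noncomputable section PDaux

open MvPowerSeries Finsupp

variable {n : ℕ}

/-- total degree of a multi-index -/
def dg (e : Fin n →₀ ℕ) : ℕ := e.sum fun _ k => k

lemma dg_eq_sum (e : Fin n →₀ ℕ) : dg e = ∑ i, e i :=
  Finsupp.sum_fintype _ _ (fun _ => rfl)

lemma dg_add (a b : Fin n →₀ ℕ) : dg (a + b) = dg a + dg b :=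
  Finsupp.sum_add_index' (fun _ => rfl) (fun _ _ _ => rfl)

lemma le_dg (e : Fin n →₀ ℕ) (i : Fin n) : e i ≤ dg e := by
  rw [dg_eq_sum]
  exact Finset.single_le_sum (fun j _ => Nat.zero_le _) (Finset.mem_univ i)

lemma dg_eq_zero {e : Fin n →₀ ℕ} (h : dg e = 0) : e = 0 := by
  ext i
  have h1 := le_dg e i
  have h2 : (0 : Fin n →₀ ℕ) i = 0 := rfl
  omega

lemma eq_single_of_dg_one {e : Fin n →₀ ℕ} (h : dg e = 1) :
    ∃ i, e = Finsupp.single i 1 := by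
  rw [dg_eq_sum] at h
  have hex : ∃ i, e i ≠ 0 := by
    by_contra h'
    push_neg at h'
    simp [h'] at h
  obtain ⟨i, hi⟩ := hex
  have hsplit : e i + ∑ j ∈ Finset.univ.erase i, e j = 1 := by
    rw [Finset.add_sum_erase _ _ (Finset.mem_univ i)]; exact h
  have hei : e i = 1 := by omega
  have hrest : ∑ j ∈ Finset.univ.erase i, e j = 0 := by omega
  refine ⟨i, ?_⟩
  ext j
  rcases eq_or_ne j i with rfl | hji
  · simp [hei]
  · have : e j = 0 := by
      have := Finset.sum_eq_zero_iff.mp hrest j (Finset.mem_erase.mpr ⟨hji, Finset.mem_univ j⟩)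
      exact this
    simp [this, Finsupp.single_apply, (Ne.symm hji : i ≠ j)]

/-- `f` and `g` both vanish in degrees `< d` and agree in degree `d`. -/
structure Agree (d : ℕ) (f g : MvPowerSeries (Fin n) ℂ) : Prop where
  hf : ∀ e, dg e < d → MvPowerSeries.coeff e f = 0
  hg : ∀ e, dg e < d → MvPowerSeries.coeff e g = 0
  heq : ∀ e, dg e = d → MvPowerSeries.coeff e f = MvPowerSeries.coeff e g

lemma Agree.one : Agree (n := n) 0 1 1 :=
  ⟨fun e he => absurd he (Nat.not_lt_zero _), fun e he => absurd he (Nat.not_lt_zero _),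
   fun _ _ => rfl⟩

lemma Agree.mul {d d' : ℕ} {f g f' g' : MvPowerSeries (Fin n) ℂ}
    (h : Agree d f g) (h' : Agree d' f' g') : Agree (d + d') (f * f') (g * g') := by
  classical
  have key : ∀ (u u' : MvPowerSeries (Fin n) ℂ),
      (∀ e, dg e < d → MvPowerSeries.coeff e u = 0) →
      (∀ e, dg e < d' → MvPowerSeries.coeff e u' = 0) →
      ∀ e, dg e < d + d' → MvPowerSeries.coeff e (u * u') = 0 := by
    intro u u' hu hu' e he
    rw [MvPowerSeries.coeff_mul]
    refine Finset.sum_eq_zero fun p hp => ?_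
    have hpe : p.1 + p.2 = e := Finset.HasAntidiagonal.mem_antidiagonal.mp hp
    have hdg : dg p.1 + dg p.2 = dg e := by rw [← dg_add, hpe]
    rcases Nat.lt_or_ge (dg p.1) d with h1 | h1
    · rw [hu _ h1, zero_mul]
    · have h2 : dg p.2 < d' := by omega
      rw [hu' _ h2, mul_zero]
  refine ⟨key f f' h.hf h'.hf, key g g' h.hg h'.hg, ?_⟩
  intro e he
  rw [MvPowerSeries.coeff_mul, MvPowerSeries.coeff_mul]
  refine Finset.sum_congr rfl fun p hp => ?_
  have hpe : p.1 + p.2 = e := Finset.HasAntidiagonal.mem_antidiagonal.mp hp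
  have hdg : dg p.1 + dg p.2 = dg e := by rw [← dg_add, hpe]
  rcases Nat.lt_or_ge (dg p.1) d with h1 | h1
  · rw [h.hf _ h1, h.hg _ h1, zero_mul, zero_mul]
  · rcases Nat.lt_or_ge (dg p.2) d' with h2 | h2
    · rw [h'.hf _ h2, h'.hg _ h2, mul_zero, mul_zero]
    · have e1 : dg p.1 = d := by omega
      have e2 : dg p.2 = d' := by omega
      rw [h.heq _ e1, h'.heq _ e2]

lemma Agree.pow {d : ℕ} {f g : MvPowerSeries (Fin n) ℂ} (h : Agree d f g) (k : ℕ) :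
    Agree (k * d) (f ^ k) (g ^ k) := by
  induction k with
  | zero => simpa using Agree.one
  | succ k ih =>
      have := ih.mul h
      rw [← pow_succ, ← pow_succ] at this
      have hk : (k + 1) * d = k * d + d := by ring
      rwa [hk]

lemma Agree.prod {d : Fin n → ℕ} {f g : Fin n → MvPowerSeries (Fin n) ℂ}
    (h : ∀ j, Agree (d j) (f j) (g j)) :
    Agree (∑ j, d j) (∏ j, f j) (∏ j, g j) := by
  classical
  induction (Finset.univ : Finset (Fin n)) using Finset.induction_on with
  | empty => simpa using Agree.one
  | insert _ _ hj ih =>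
      rw [Finset.sum_insert hj, Finset.prod_insert hj, Finset.prod_insert hj]
      exact (h _).mul ih

lemma monomial_pow (a : Fin n →₀ ℕ) (c : ℂ) (k : ℕ) :
    (MvPowerSeries.monomial a c) ^ k = MvPowerSeries.monomial (k • a) (c ^ k) := by
  induction k with
  | zero => simp [MvPowerSeries.monomial_zero_one]
  | succ k ih =>
      rw [pow_succ, ih, MvPowerSeries.monomial_mul_monomial, pow_succ, succ_nsmul]

lemma prod_monomial (a : Fin n → (Fin n →₀ ℕ)) (c : Fin n → ℂ) :
    ∏ j, MvPowerSeries.monomial (a j) (c j)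
      = MvPowerSeries.monomial (∑ j, a j) (∏ j, c j) := by
  classical
  induction (Finset.univ : Finset (Fin n)) using Finset.induction_on with
  | empty => simp [MvPowerSeries.monomial_zero_one]
  | insert _ _ hj ih =>
      rw [Finset.sum_insert hj, Finset.prod_insert hj, Finset.prod_insert hj, ih,
        MvPowerSeries.monomial_mul_monomial]

end PDaux
section PDmain

open MvPowerSeries Finsupp

lemma dg_single {n : ℕ} (j : Fin n) (k : ℕ) : dg (Finsupp.single j k) = k :=
  Finsupp.sum_single_index rfl

lemma agree_gamma {n : ℕ} (lam : Fin n → ℂ) (γ : Fin n → MvPowerSeries (Fin n) ℂ)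
    (hγ0 : ∀ i, MvPowerSeries.constantCoeff (γ i) = 0)
    (hγ1 : ∀ i j, MvPowerSeries.coeff (Finsupp.single j 1) (γ i)
        = if j = i then lam i else 0) (j : Fin n) :
    Agree 1 (γ j) (MvPowerSeries.monomial (Finsupp.single j 1) (lam j)) := by
  classical
  constructor
  · intro e he
    have h0 : e = 0 := dg_eq_zero (by omega)
    rw [h0, MvPowerSeries.coeff_zero_eq_constantCoeff]
    exact hγ0 j
  · intro e he
    have h0 : e = 0 := dg_eq_zero (by omega)
    rw [h0, MvPowerSeries.coeff_monomial]
    rw [if_neg]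
    intro hc
    exact one_ne_zero (Finsupp.single_eq_zero.mp hc.symm)
  · intro e he
    obtain ⟨s, rfl⟩ := eq_single_of_dg_one he
    rw [hγ1 j s, MvPowerSeries.coeff_monomial]
    rcases eq_or_ne s j with rfl | hsj
    · simp
    · rw [if_neg hsj, if_neg]
      intro hc
      exact hsj ((Finsupp.single_left_inj one_ne_zero).mp hc)

lemma agree_prod_gamma {n : ℕ} (lam : Fin n → ℂ) (γ : Fin n → MvPowerSeries (Fin n) ℂ)
    (hγ0 : ∀ i, MvPowerSeries.constantCoeff (γ i) = 0)
    (hγ1 : ∀ i j, MvPowerSeries.coeff (Finsupp.single j 1) (γ i)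
        = if j = i then lam i else 0) (m : Fin n →₀ ℕ) :
    Agree (dg m) (∏ i, γ i ^ m i)
      (MvPowerSeries.monomial m (∏ i, lam i ^ m i)) := by
  have h := Agree.prod (fun j => (agree_gamma lam γ hγ0 hγ1 j).pow (m j))
  have hmono : ∀ j : Fin n,
      (MvPowerSeries.monomial (Finsupp.single j 1) (lam j)) ^ (m j)
        = MvPowerSeries.monomial (Finsupp.single j (m j)) (lam j ^ m j) := by
    intro j
    rw [monomial_pow]
    congr 1
    rw [Finsupp.smul_single, smul_eq_mul, mul_one]
  simp only [hmono] at h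
  rw [prod_monomial, Finsupp.univ_sum_single] at h
  have hd : ∑ j, m j * 1 = dg m := by
    simp [dg_eq_sum]
  rwa [hd] at h

/-- the coefficients of the linearizing series, defined by degree-recursion -/
noncomputable def cf (n : ℕ) (lam : Fin n → ℂ) (γ : Fin n → MvPowerSeries (Fin n) ℂ)
    (i : Fin n) (e : Fin n →₀ ℕ) : ℂ :=
  if dg e ≤ 1 then (if e = Finsupp.single i 1 then 1 else 0)
  else (lam i - ∏ j, lam j ^ e j)⁻¹ *
    ∑ m ∈ ((Finset.Iic (Finsupp.equivFunOnFinite.symm fun _ => dg e)).filter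
        (fun m => dg m < dg e)).attach,
      cf n lam γ i m.1 * MvPowerSeries.coeff e (∏ j, γ j ^ m.1 j)
termination_by dg e
decreasing_by exact (Finset.mem_filter.mp m.2).2

lemma cf_zero {n : ℕ} (lam : Fin n → ℂ) (γ : Fin n → MvPowerSeries (Fin n) ℂ)
    (i : Fin n) : cf n lam γ i 0 = 0 := by
  rw [cf]
  have h0 : dg (0 : Fin n →₀ ℕ) = 0 := by simp [dg]
  rw [if_pos (by omega), if_neg]
  exact fun hc => one_ne_zero (Finsupp.single_eq_zero.mp hc.symm)

lemma cf_single {n : ℕ} (lam : Fin n → ℂ) (γ : Fin n → MvPowerSeries (Fin n) ℂ)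
    (i j : Fin n) :
    cf n lam γ i (Finsupp.single j 1) = if i = j then 1 else 0 := by
  rw [cf, if_pos (by rw [dg_single])]
  rcases eq_or_ne i j with rfl | hij
  · simp
  · rw [if_neg, if_neg hij]
    intro hc
    exact hij (((Finsupp.single_left_inj one_ne_zero).mp hc).symm)

end PDmain
section PDfinal

open MvPowerSeries Finsupp

lemma main_eq {n : ℕ} (lam : Fin n → ℂ) (γ : Fin n → MvPowerSeries (Fin n) ℂ)
    (hres : ∀ (s : Fin n) (m : Fin n → ℕ), 2 ≤ ∑ i, m i → (∏ i, lam i ^ m i) ≠ lam s)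
    (hγ0 : ∀ i, MvPowerSeries.constantCoeff (γ i) = 0)
    (hγ1 : ∀ i j, MvPowerSeries.coeff (Finsupp.single j 1) (γ i)
        = if j = i then lam i else 0)
    (i : Fin n) (e : Fin n →₀ ℕ) :
    ∑ m ∈ Finset.Iic (Finsupp.equivFunOnFinite.symm fun _ => dg e),
        cf n lam γ i m * MvPowerSeries.coeff e (∏ j, γ j ^ m j)
      = lam i * cf n lam γ i e := by
  classical
  set B : Fin n →₀ ℕ := Finsupp.equivFunOnFinite.symm fun _ => dg e with hB
  have hK := agree_prod_gamma lam γ hγ0 hγ1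
  have heB : e ∈ Finset.Iic B := by
    rw [Finset.mem_Iic, Finsupp.le_def]
    intro j
    exact le_dg e j
  rw [← Finset.sum_filter_add_sum_filter_not (Finset.Iic B) (fun m => dg m < dg e)]
  have hsecond :
      ∑ m ∈ (Finset.Iic B).filter (fun m => ¬ dg m < dg e),
          cf n lam γ i m * MvPowerSeries.coeff e (∏ j, γ j ^ m j)
        = cf n lam γ i e * ∏ j, lam j ^ e j := by
    have hmem : e ∈ (Finset.Iic B).filter (fun m => ¬ dg m < dg e) :=
      Finset.mem_filter.mpr ⟨heB, by omega⟩
    rw [Finset.sum_eq_single_of_mem e hmem ?_]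
    · rw [(hK e).heq e rfl, MvPowerSeries.coeff_monomial, if_pos rfl]
    · intro m hm hme
      have h2 : ¬ dg m < dg e := (Finset.mem_filter.mp hm).2
      rcases Nat.lt_or_ge (dg e) (dg m) with h3 | h3
      · rw [(hK m).hf e h3, mul_zero]
      · have h4 : dg e = dg m := by omega
        rw [(hK m).heq e h4, MvPowerSeries.coeff_monomial, if_neg (Ne.symm hme), mul_zero]
  rw [hsecond]
  rcases Nat.lt_or_ge (dg e) 2 with hlt | hge
  · rcases Nat.lt_or_ge (dg e) 1 with h0 | h1
    · -- dg e = 0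
      have he0 : e = 0 := dg_eq_zero (by omega)
      have hS : ∑ m ∈ (Finset.Iic B).filter (fun m => dg m < dg e),
          cf n lam γ i m * MvPowerSeries.coeff e (∏ j, γ j ^ m j) = 0 :=
        Finset.sum_eq_zero fun m hm => absurd (Finset.mem_filter.mp hm).2 (by omega)
      rw [hS, he0, cf_zero, zero_mul, mul_zero, add_zero]
    · -- dg e = 1
      have he1 : dg e = 1 := by omega
      have hS : ∑ m ∈ (Finset.Iic B).filter (fun m => dg m < dg e),
          cf n lam γ i m * MvPowerSeries.coeff e (∏ j, γ j ^ m j) = 0 := by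
        refine Finset.sum_eq_zero fun m hm => ?_
        have h2 : dg m < dg e := (Finset.mem_filter.mp hm).2
        have hm0 : m = 0 := dg_eq_zero (by omega)
        rw [hm0, cf_zero, zero_mul]
      rw [hS, zero_add]
      obtain ⟨s, rfl⟩ := eq_single_of_dg_one he1
      have hprod : ∏ j, lam j ^ (Finsupp.single s 1) j = lam s := by
        rw [Finset.prod_eq_single s]
        · simp
        · intro j _ hjs
          rw [Finsupp.single_apply, if_neg (fun h => hjs h.symm), pow_zero]
        · exact fun h => absurd (Finset.mem_univ s) h
      rw [hprod, cf_single]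
      rcases eq_or_ne i s with rfl | his
      · simp [mul_comm]
      · simp [his]
  · -- dg e ≥ 2
    have hcf : cf n lam γ i e = (lam i - ∏ j, lam j ^ e j)⁻¹ *
        ∑ m ∈ (Finset.Iic B).filter (fun m => dg m < dg e),
          cf n lam γ i m * MvPowerSeries.coeff e (∏ j, γ j ^ m j) := by
      rw [cf, if_neg (by omega)]
      congr 1
      exact Finset.sum_attach ((Finset.Iic B).filter fun m => dg m < dg e)
        (fun m => cf n lam γ i m * MvPowerSeries.coeff e (∏ j, γ j ^ m j))
    have hne : lam i - ∏ j, lam j ^ e j ≠ 0 := by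
      have h2 : 2 ≤ ∑ j, e j := by rw [← dg_eq_sum]; omega
      exact sub_ne_zero.mpr (Ne.symm (hres i (fun j => e j) h2))
    set S := ∑ m ∈ (Finset.Iic B).filter (fun m => dg m < dg e),
        cf n lam γ i m * MvPowerSeries.coeff e (∏ j, γ j ^ m j) with hSdef
    have key : cf n lam γ i e * (lam i - ∏ j, lam j ^ e j) = S := by
      rw [hcf]
      field_simp
    linear_combination -key

end PDfinal

/-- Formal Poincaré–Dulac linearization: if `λ ∈ (ℂ*)ⁿ` has no resonances in degrees
`≥ 2`, then any tuple `γ` of formal power series with zero constant term and diagonal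
linear part `d_λ` is formally conjugate to `d_λ`: there is a tuple `h` of formal power
series with zero constant term and identity linear part with `h ∘ γ = d_λ ∘ h`. -/
theorem stmt_16 (n : ℕ) (hn : 1 ≤ n) (lam : Fin n → ℂ) (hlam : ∀ i, lam i ≠ 0)
    (hres : ∀ (s : Fin n) (m : Fin n → ℕ), 2 ≤ ∑ i, m i → (∏ i, lam i ^ m i) ≠ lam s)
    (γ : Fin n → MvPowerSeries (Fin n) ℂ)
    (hγ0 : ∀ i, MvPowerSeries.constantCoeff (γ i) = 0)
    (hγ1 : ∀ i j, MvPowerSeries.coeff (Finsupp.single j 1) (γ i)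
        = if j = i then lam i else 0) :
    ∃ h : Fin n → MvPowerSeries (Fin n) ℂ,
      (∀ i, MvPowerSeries.constantCoeff (h i) = 0) ∧
      (∀ i j, MvPowerSeries.coeff (Finsupp.single j 1) (h i)
          = if i = j then 1 else 0) ∧
      (∀ i, psComp n γ (h i) = lam i • h i) := by
  refine ⟨fun i => @id (MvPowerSeries (Fin n) ℂ) (cf n lam γ i), ?_, ?_, ?_⟩
  · intro i
    rw [← MvPowerSeries.coeff_zero_eq_constantCoeff, MvPowerSeries.coeff_apply]
    exact cf_zero lam γ i
  · intro i j
    rw [MvPowerSeries.coeff_apply]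
    exact cf_single lam γ i j
  · intro i
    ext e
    rw [MvPowerSeries.coeff_smul, MvPowerSeries.coeff_apply, MvPowerSeries.coeff_apply]
    show (∑ m ∈ Finset.Iic (Finsupp.equivFunOnFinite.symm fun _ => e.sum fun _ k => k),
        MvPowerSeries.coeff m (cf n lam γ i : MvPowerSeries (Fin n) ℂ)
          * MvPowerSeries.coeff e (∏ j, γ j ^ m j))
      = lam i * cf n lam γ i e
    simp only [MvPowerSeries.coeff_apply]
    exact main_eq lam γ hres hγ0 hγ1 i e
end
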